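/- Let D be the distance matrix of the complete m-partite graph K_{n₁,...,n_m} on N = Σ nᵢ vertices. Then det D = (-2)^{N-m} · [ Σ_{i=1}^m ( nᵢ · Π_{j≠i} (nⱼ - 2) ) + Π_{i=1}^m (nᵢ - 2) ]. -/

import Mathlib

open Finset Matrix

lemma erase_zero_prod {k : ℕ} (d : Fin (k+1) → ℝ) :
    ∏ j ∈ (Finset.univ.erase (0 : Fin (k+1))), d j = ∏ j : Fin k, d j.succ := by
  rw [Fin.univ_succ, Finset.erase_cons, Finset.prod_map]
  rfl

lemma erase_succ_prod {k : ℕ} (d : Fin (k+1) → ℝ) (i : Fin k) :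
    ∏ j ∈ (Finset.univ.erase i.succ), d j
      = d 0 * ∏ j ∈ Finset.univ.erase i, d j.succ := by
  have h0 : (0 : Fin (k+1)) ∈ (Finset.univ.erase i.succ) :=
    Finset.mem_erase.2 ⟨(Fin.succ_ne_zero i).symm, Finset.mem_univ _⟩
  rw [← Finset.mul_prod_erase _ _ h0, Finset.erase_right_comm]
  congr 1
  rw [show (Finset.univ.erase (0 : Fin (k+1)))
        = Finset.univ.map ⟨Fin.succ, Fin.succ_injective _⟩ from by
      rw [Fin.univ_succ]; exact Finset.erase_cons _,
    show i.succ = (⟨Fin.succ, Fin.succ_injective _⟩ : Fin k ↪ Fin (k+1)) i from rfl,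
    ← Finset.map_erase, Finset.prod_map]
  rfl

lemma det_diag_add_rank_one : ∀ (k : ℕ) (d u v : Fin k → ℝ),
    (Matrix.of fun i j => (if i = j then d i else 0) + u i * v j).det
      = ∏ i, d i + ∑ i, u i * v i * ∏ j ∈ Finset.univ.erase i, d j := by
  intro k
  induction k with
  | zero => intro d u v; simp [Matrix.det_fin_zero]
  | succ k ih =>
    intro d u v
    set M : Matrix (Fin (k+1)) (Fin (k+1)) ℝ :=
      Matrix.of fun i j => (if i = j then d i else 0) + u i * v j with hM
    have hrow : M 0 = (fun j => if (0 : Fin (k+1)) = j then d 0 else 0)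
        + (fun j => u 0 * v j) := by
      funext j; simp [hM]
    have hsplit : M.det
        = (M.updateRow 0 (fun j => if (0 : Fin (k+1)) = j then d 0 else 0)).det
          + (M.updateRow 0 (fun j => u 0 * v j)).det := by
      rw [← Matrix.det_updateRow_add, ← hrow, Matrix.updateRow_eq_self]
    -- Term A
    have hsubA : (M.updateRow 0 (fun j => if (0 : Fin (k+1)) = j then d 0 else 0)).submatrix
        Fin.succ Fin.succ
        = Matrix.of fun i j => (if i = j then d i.succ else 0) + u i.succ * v j.succ := by
      ext i j
      simp [Matrix.updateRow_ne (Fin.succ_ne_zero i), hM, Fin.succ_inj]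
    have hA : (M.updateRow 0 (fun j => if (0 : Fin (k+1)) = j then d 0 else 0)).det
        = d 0 * (∏ i : Fin k, d i.succ
            + ∑ i : Fin k, u i.succ * v i.succ * ∏ j ∈ Finset.univ.erase i, d j.succ) := by
      rw [Matrix.det_succ_row_zero, Fin.sum_univ_succ]
      simp only [Matrix.updateRow_self]
      rw [show ((M.updateRow 0 fun j => if (0 : Fin (k+1)) = j then d 0 else 0).submatrix
          Fin.succ (Fin.succAbove 0)) = (M.updateRow 0 fun j => if (0 : Fin (k+1)) = j
          then d 0 else 0).submatrix Fin.succ Fin.succ from by rw [Fin.succAbove_zero]]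
      rw [hsubA, ih]
      simp [(Fin.succ_ne_zero _).symm]
    -- Term B
    have hB : (M.updateRow 0 (fun j => u 0 * v j)).det
        = u 0 * (v 0 * ∏ i : Fin k, d i.succ) := by
      have h1 : (fun j => u 0 * v j) = u 0 • v := rfl
      rw [h1, Matrix.det_updateRow_smul]
      congr 1
      set A0 : Matrix (Fin (k+1)) (Fin (k+1)) ℝ :=
        Matrix.of fun i j => if i = 0 then v j else if i = j then d i else 0 with hA0
      have hred : (M.updateRow 0 v).det = A0.det := by
        refine Matrix.det_eq_of_forall_row_eq_smul_add_const
          (fun i => if i = 0 then 0 else u i) 0 (by simp) ?_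
        intro i j
        by_cases hi : i = 0
        · subst hi; simp [hA0]
        · simp [Matrix.updateRow_ne hi, hA0, hi, hM]
      rw [hred, Matrix.det_succ_column_zero, Fin.sum_univ_succ]
      have hsub : A0.submatrix (Fin.succAbove 0) Fin.succ
          = Matrix.diagonal (fun i => d i.succ) := by
        ext i j
        simp [hA0, Fin.succAbove_zero, Matrix.diagonal, Fin.succ_ne_zero, Fin.succ_inj]
      simp only [hsub]
      simp [hA0, Fin.succ_ne_zero, Matrix.det_diagonal]
    rw [hsplit, hA, hB, Fin.prod_univ_succ, Fin.sum_univ_succ]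
    rw [erase_zero_prod]
    have : ∀ i : Fin k, u i.succ * v i.succ * ∏ j ∈ Finset.univ.erase i.succ, d j
        = d 0 * (u i.succ * v i.succ * ∏ j ∈ Finset.univ.erase i, d j.succ) := by
      intro i; rw [erase_succ_prod]; ring
    rw [Finset.sum_congr rfl (fun i _ => this i)]
    rw [← Finset.mul_sum]
    ring

theorem stmt2 (m : ℕ) (hm : 2 ≤ m) (n : Fin m → ℕ) (hn : ∀ i, 1 ≤ n i)
    (D : Matrix ((i : Fin m) × Fin (n i)) ((i : Fin m) × Fin (n i)) ℝ)
    (hD : ∀ u v, D u v = if u = v then 0 else if u.1 = v.1 then 2 else 1) :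
    D.det =
      (-2 : ℝ) ^ ((∑ i, n i) - m) *
        ((∑ i : Fin m, (n i : ℝ) * ∏ j ∈ Finset.univ.erase i, ((n j : ℝ) - 2))
          + ∏ i : Fin m, ((n i : ℝ) - 2)) := by
  classical
  set C' : Matrix ((i : Fin m) × Fin (n i)) (Fin m) ℝ :=
    Matrix.of fun v j => (-(1/2) : ℝ) * (1 + if v.1 = j then 1 else 0) with hC'
  set R : Matrix (Fin m) ((i : Fin m) × Fin (n i)) ℝ :=
    Matrix.of fun i v => if v.1 = i then 1 else 0 with hR
  -- factor D
  have hfact : D = (-2 : ℝ) • (1 + C' * R) := by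
    ext u v
    have hmul : (C' * R) u v = (-(1/2) : ℝ) * (1 + if u.1 = v.1 then 1 else 0) := by
      rw [Matrix.mul_apply]
      simp only [hC', hR, Matrix.of_apply, mul_ite, mul_one, mul_zero]
      rw [Finset.sum_ite_eq]
      simp
    rw [hD, Matrix.smul_apply, Matrix.add_apply, hmul, Matrix.one_apply]
    by_cases h1 : u = v
    · subst h1; simp; norm_num
    · by_cases h2 : u.1 = v.1 <;> simp [h1, h2] <;> norm_num
  -- the small matrix
  have hRC : (1 : Matrix (Fin m) (Fin m) ℝ) + R * C'
      = Matrix.of fun i j =>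
          (if i = j then (-(1/2) : ℝ) * ((n i : ℝ) - 2) else 0)
            + (-(1/2) * (n i : ℝ)) * (fun _ : Fin m => (1:ℝ)) j := by
    ext i j
    have hmul : (R * C') i j
        = (n i : ℝ) * ((-(1/2) : ℝ) * (1 + if i = j then 1 else 0)) := by
      rw [Matrix.mul_apply,
        show (Finset.univ : Finset ((i : Fin m) × Fin (n i)))
          = Finset.univ.sigma (fun _ => Finset.univ) from (Finset.univ_sigma_univ).symm,
        Finset.sum_sigma]
      simp only [hC', hR, Matrix.of_apply]
      simp only [ite_mul, one_mul, zero_mul]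
      have hin : ∀ x : Fin m,
          (∑ _b : Fin (n x), if x = i then (-(1/2) : ℝ) * (1 + if x = j then 1 else 0) else 0)
            = if x = i then (n x : ℝ) * ((-(1/2) : ℝ) * (1 + if x = j then 1 else 0)) else 0 := by
        intro x
        split <;> simp [Finset.sum_const, nsmul_eq_mul]
      rw [Finset.sum_congr rfl (fun x _ => hin x), Finset.sum_ite_eq' Finset.univ i]
      simp
    rw [Matrix.add_apply, hmul, Matrix.one_apply]
    by_cases h : i = j <;> simp [h] <;> ring
  -- determinant computation
  have hcard : Fintype.card ((i : Fin m) × Fin (n i)) = ∑ i, n i := by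
    simp [Fintype.card_sigma]
  have hdet1 : D.det = (-2 : ℝ) ^ (∑ i, n i) * (1 + R * C').det := by
    rw [hfact, Matrix.det_smul, hcard, ← Matrix.det_one_add_mul_comm]
  have hdet2 : (1 + R * C').det
      = ∏ i, (-(1/2) : ℝ) * ((n i : ℝ) - 2)
        + ∑ i, (-(1/2) * (n i : ℝ)) * (fun _ : Fin m => (1:ℝ)) i
            * ∏ j ∈ Finset.univ.erase i, (-(1/2) : ℝ) * ((n j : ℝ) - 2) := by
    rw [hRC]
    exact det_diag_add_rank_one m _ _ _
  -- simplify the scalar products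
  have hm0 : 0 < m := lt_of_lt_of_le (by norm_num) hm
  have hprod : ∏ i, (-(1/2) : ℝ) * ((n i : ℝ) - 2)
      = (-(1/2) : ℝ) ^ m * ∏ i : Fin m, ((n i : ℝ) - 2) := by
    rw [Finset.prod_mul_distrib, Finset.prod_const]
    simp
  have herase : ∀ i : Fin m, ∏ j ∈ Finset.univ.erase i, (-(1/2) : ℝ) * ((n j : ℝ) - 2)
      = (-(1/2) : ℝ) ^ (m - 1) * ∏ j ∈ Finset.univ.erase i, ((n j : ℝ) - 2) := by
    intro i
    rw [Finset.prod_mul_distrib, Finset.prod_const, Finset.card_erase_of_mem (Finset.mem_univ i)]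
    simp
  have hpowm : (-(1/2) : ℝ) * (-(1/2) : ℝ) ^ (m - 1) = (-(1/2) : ℝ) ^ m := by
    rw [← pow_succ', Nat.sub_add_cancel hm0]
  have hsum : ∑ i, (-(1/2) * (n i : ℝ)) * (fun _ : Fin m => (1:ℝ)) i
        * ∏ j ∈ Finset.univ.erase i, (-(1/2) : ℝ) * ((n j : ℝ) - 2)
      = (-(1/2) : ℝ) ^ m * ∑ i, (n i : ℝ) * ∏ j ∈ Finset.univ.erase i, ((n j : ℝ) - 2) := by
    rw [Finset.mul_sum]
    refine Finset.sum_congr rfl fun i _ => ?_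
    rw [herase i, ← hpowm]
    ring
  have hNm : m ≤ ∑ i, n i := by
    calc m = ∑ _i : Fin m, 1 := by simp
    _ ≤ ∑ i, n i := Finset.sum_le_sum fun i _ => hn i
  have hpow : (-2 : ℝ) ^ (∑ i, n i) * (-(1/2) : ℝ) ^ m = (-2 : ℝ) ^ ((∑ i, n i) - m) := by
    rw [show (∑ i, n i) = ((∑ i, n i) - m) + m from (Nat.sub_add_cancel hNm).symm, pow_add]
    rw [mul_assoc, ← mul_pow]
    norm_num
  rw [hdet1, hdet2, hprod, hsum, ← hpow]
  ring
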